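/- For fixed y > 0, z > 0, α > 0 and any A, B with y^(1/α) ≤ A ≤ B, the maximum of g(x) = (y * z^x / x^α)^x over x ∈ [A, B] is at most the maximum of (y * (e/A)^α)^(A/2), g(A), and g(B). -/

import Mathlib

open Real

/-- For `y, z, α > 0` and `y^(1/α) ≤ A ≤ B`, the maximum of `g(x) = (y z^x / x^α)^x`
over `[A, B]` is at most `max { (y (e/A)^α)^(A/2), g(A), g(B) }`. -/
theorem stmt_7 (y z α A B : ℝ) (hy : 0 < y) (hz : 0 < z) (hα : 0 < α)
    (hA : y ^ (1 / α) ≤ A) (hAB : A ≤ B) :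
    ∀ x ∈ Set.Icc A B,
      (y * z ^ x / x ^ α) ^ x
        ≤ max ((y * (Real.exp 1 / A) ^ α) ^ (A / 2))
            (max ((y * z ^ A / A ^ α) ^ A) ((y * z ^ B / B ^ α) ^ B)) := by
  have hApos : 0 < A := lt_of_lt_of_le (Real.rpow_pos_of_pos hy _) hA
  have hBpos : 0 < B := lt_of_lt_of_le hApos hAB
  set L := Real.log y with hL
  set M := Real.log z with hM
  -- log y ≤ α * log A
  have hLA : L ≤ α * Real.log A := by
    have h1 : Real.log (y ^ (1 / α)) ≤ Real.log A :=
      Real.log_le_log (Real.rpow_pos_of_pos hy _) hA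
    rw [Real.log_rpow hy] at h1
    have := mul_le_mul_of_nonneg_left h1 hα.le
    calc L = α * (1 / α * L) := by field_simp
    _ ≤ α * Real.log A := this
  set f : ℝ → ℝ := fun t => t * L + t * t * M - α * (t * Real.log t) with hf
  set h : ℝ → ℝ := fun t => t / 2 * (L + α) - α / 2 * (t * Real.log t) with hh
  -- derivatives
  have hfd : ∀ t : ℝ, t ≠ 0 → HasDerivAt f (L + 2 * t * M - α * (Real.log t + 1)) t := by
    intro t ht
    have h1 : HasDerivAt (fun t : ℝ => t * L) L t := by
      simpa using (hasDerivAt_id t).mul_const L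
    have h2 : HasDerivAt (fun t : ℝ => t * t * M) (2 * t * M) t := by
      have := ((hasDerivAt_id t).mul (hasDerivAt_id t)).mul_const M
      simpa [two_mul] using this
    have h3 : HasDerivAt (fun t : ℝ => t * Real.log t) (Real.log t + 1) t := by
      have := (hasDerivAt_id' t).mul (Real.hasDerivAt_log ht)
      exact this.congr_deriv (by simp [mul_inv_cancel₀ ht])
    have := (h1.add h2).sub ((h3.const_mul α))
    exact this
  have hhd : ∀ t : ℝ, t ≠ 0 → HasDerivAt h ((L - α * Real.log t) / 2) t := by
    intro t ht
    have h1 : HasDerivAt (fun t : ℝ => t / 2 * (L + α)) ((L + α) / 2) t := by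
      have := ((hasDerivAt_id t).div_const 2).mul_const (L + α)
      exact this.congr_deriv (by ring)
    have h3 : HasDerivAt (fun t : ℝ => t * Real.log t) (Real.log t + 1) t := by
      have := (hasDerivAt_id' t).mul (Real.hasDerivAt_log ht)
      exact this.congr_deriv (by simp [mul_inv_cancel₀ ht])
    have := h1.sub (h3.const_mul (α / 2))
    exact this.congr_deriv (by ring)
  -- h is antitone on [A, ∞)
  have hanti : AntitoneOn h (Set.Ici A) := by
    apply antitoneOn_of_deriv_nonpos (convex_Ici A)
    · intro t ht
      exact ((hhd t (lt_of_lt_of_le hApos ht).ne').continuousAt).continuousWithinAt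
    · intro t ht
      rw [interior_Ici] at ht
      exact ((hhd t (lt_trans hApos ht).ne').differentiableAt).differentiableWithinAt
    · intro t ht
      rw [interior_Ici] at ht
      have htA : A < t := ht
      rw [(hhd t (lt_trans hApos ht).ne').deriv]
      have : Real.log A ≤ Real.log t := Real.log_le_log hApos htA.le
      nlinarith [mul_le_mul_of_nonneg_left this hα.le]
  -- rewrite g as exp ∘ f
  have hgf : ∀ x : ℝ, 0 < x → (y * z ^ x / x ^ α) ^ x = Real.exp (f x) := by
    intro x hx
    have hbase : 0 < y * z ^ x / x ^ α :=
      div_pos (mul_pos hy (Real.rpow_pos_of_pos hz _)) (Real.rpow_pos_of_pos hx _)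
    rw [Real.rpow_def_of_pos hbase]
    congr 1
    rw [Real.log_div (by positivity) (by positivity), Real.log_mul hy.ne' (by positivity),
      Real.log_rpow hz, Real.log_rpow hx]
    simp only [hf]; ring
  -- rewrite first max term as exp (h A)
  have hfirst : (y * (Real.exp 1 / A) ^ α) ^ (A / 2) = Real.exp (h A) := by
    have hbase : 0 < y * (Real.exp 1 / A) ^ α :=
      mul_pos hy (Real.rpow_pos_of_pos (div_pos (Real.exp_pos 1) hApos) _)
    rw [Real.rpow_def_of_pos hbase]
    congr 1
    rw [Real.log_mul hy.ne' (by positivity), Real.log_rpow (by positivity),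
      Real.log_div (Real.exp_pos 1).ne' hApos.ne', Real.log_exp]
    simp only [hh]; ring
  -- max of f on [A, B]
  have hfc : ContinuousOn f (Set.Icc A B) := by
    intro t ht
    exact ((hfd t (lt_of_lt_of_le hApos ht.1).ne').continuousAt).continuousWithinAt
  obtain ⟨c, hcmem, hcmax⟩ := isCompact_Icc.exists_isMaxOn ⟨A, Set.left_mem_Icc.mpr hAB⟩ hfc
  intro x hx
  have hxpos : 0 < x := lt_of_lt_of_le hApos hx.1
  rw [hgf x hxpos]
  have hfxc : f x ≤ f c := hcmax hx
  rcases eq_or_lt_of_le hcmem.1 with hcA | hcA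
  · -- c = A
    refine le_trans ?_ (le_max_of_le_right (le_max_left _ _))
    rw [hgf A hApos, Real.exp_le_exp, hcA]
    exact hfxc
  rcases eq_or_lt_of_le hcmem.2 with hcB | hcB
  · -- c = B
    refine le_trans ?_ (le_max_of_le_right (le_max_right _ _))
    rw [hgf B hBpos, Real.exp_le_exp, ← hcB]
    exact hfxc
  · -- interior critical point
    have hcpos : 0 < c := lt_trans hApos hcA
    have hloc : IsLocalMax f c := hcmax.isLocalMax (Icc_mem_nhds hcA hcB)
    have hcrit : L + 2 * c * M - α * (Real.log c + 1) = 0 :=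
      hloc.hasDerivAt_eq_zero (hfd c hcpos.ne')
    have hfh : f c = h c := by
      simp only [hf, hh]
      nlinarith [hcrit, mul_self_nonneg c]
    refine le_trans ?_ (le_max_left _ _)
    rw [hfirst, Real.exp_le_exp]
    calc f x ≤ f c := hfxc
    _ = h c := hfh
    _ ≤ h A := hanti (le_refl A) hcA.le hcA.le
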